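/- Let f be a Boolean network on n+1 variables whose last component does not depend on the last coordinate, and let g be the reduction of f obtained by eliminating the last variable. Define the edge relations E_g j i ↔ component i of g depends on coordinate j, and E_f j i ↔ component i of f depends on coordinate j. If there is a feedback loop at a vertex i in the wiring diagram of g (i.e., Relation.TransGen E_g i i), then there is a feedback loop at Fin.castSucc i in the wiring diagram of f (i.e., Relation.TransGen E_f (Fin.castSucc i) (Fin.castSucc i)). -/

import Mathlib

/-- Component `i` of `f` depends on coordinate `j`. -/
def BoolNetDependsOn {m : ℕ} (f : (Fin m → Bool) → (Fin m → Bool)) (i j : Fin m) : Prop :=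
  ∃ (x : Fin m → Bool) (b : Bool), f (Function.update x j b) i ≠ f x i

private lemma edge_lift (n : ℕ)
    (f : (Fin (n+1) → Bool) → (Fin (n+1) → Bool))
    (hf : ∀ (x : Fin (n+1) → Bool) (b : Bool),
      f (Function.update x (Fin.last n) b) (Fin.last n) = f x (Fin.last n))
    (g : (Fin n → Bool) → (Fin n → Bool))
    (hg : ∀ (y : Fin n → Bool) (i : Fin n),
      g y i = f (Fin.snoc y (f (Fin.snoc y false) (Fin.last n))) (Fin.castSucc i))
    {i j : Fin n} (h : BoolNetDependsOn g i j) :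
    Relation.TransGen (fun a b : Fin (n+1) => BoolNetDependsOn f b a)
      (Fin.castSucc j) (Fin.castSucc i) := by
  obtain ⟨y, b, hne⟩ := h
  set y' := Function.update y j b with hy'
  set s := f (Fin.snoc y false) (Fin.last n) with hs
  set s' := f (Fin.snoc y' false) (Fin.last n) with hs'
  rw [hg, hg, ← hs, ← hs'] at hne
  -- hne : f (snoc y' s') i.castSucc ≠ f (snoc y s) i.castSucc
  have hupd : (Fin.snoc y' s : Fin (n+1) → Bool)
      = Function.update (Fin.snoc y s : Fin (n+1) → Bool) (Fin.castSucc j) b :=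
    Fin.snoc_update ..
  by_cases hss : s' = s
  · -- direct edge
    apply Relation.TransGen.single
    refine ⟨Fin.snoc y s, b, ?_⟩
    rw [hss] at hne
    rwa [← hupd]
  · -- s' ≠ s: edge castSucc j → last
    have e1 : BoolNetDependsOn f (Fin.last n) (Fin.castSucc j) := by
      refine ⟨Fin.snoc y false, b, ?_⟩
      rw [← Fin.snoc_update]; exact hss
    by_cases h2 : f (Fin.snoc y' s) (Fin.castSucc i) = f (Fin.snoc y s) (Fin.castSucc i)
    · -- then f (snoc y' s') ≠ f (snoc y' s): edge last → castSucc i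
      have e2 : BoolNetDependsOn f (Fin.castSucc i) (Fin.last n) := by
        refine ⟨Fin.snoc y' s, s', ?_⟩
        rw [Fin.update_snoc_last, h2]
        exact hne
      exact Relation.TransGen.head e1 (Relation.TransGen.single e2)
    · -- direct edge castSucc j → castSucc i
      apply Relation.TransGen.single
      refine ⟨Fin.snoc y s, b, ?_⟩
      rwa [← hupd]

/-- A feedback loop at `i` in the wiring diagram of the reduction `g`
yields a feedback loop at `Fin.castSucc i` in the wiring diagram of `f`. -/
theorem feedback_loop_of_reduction (n : ℕ)
    (f : (Fin (n+1) → Bool) → (Fin (n+1) → Bool))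
    (hf : ∀ (x : Fin (n+1) → Bool) (b : Bool),
      f (Function.update x (Fin.last n) b) (Fin.last n) = f x (Fin.last n))
    (g : (Fin n → Bool) → (Fin n → Bool))
    (hg : ∀ (y : Fin n → Bool) (i : Fin n),
      g y i = f (Fin.snoc y (f (Fin.snoc y false) (Fin.last n))) (Fin.castSucc i))
    (i : Fin n)
    (h : Relation.TransGen (fun a b : Fin n => BoolNetDependsOn g b a) i i) :
    Relation.TransGen (fun a b : Fin (n+1) => BoolNetDependsOn f b a)
      (Fin.castSucc i) (Fin.castSucc i) := by
  exact Relation.TransGen.lift' Fin.castSucc (fun _ _ hd => edge_lift n f hf g hg hd) _ _ h
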